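/- The information gain expression I = ((3+2√2)·log₂(3+2√2) + (3−2√2)·log₂(3−2√2))/12 − 2/3 is positive and less than 2/3; moreover I < log₂(3)/2. -/
import Mathlib


/-- The one-way LOCC information gain
`I = ((3+2√2)·log₂(3+2√2) + (3-2√2)·log₂(3-2√2))/12 - 2/3`
satisfies `0 < I`, `I < 2/3`, and `I < log₂ 3 / 2`. -/
theorem stmt_10 :
    let I : ℝ := ((3 + 2 * Real.sqrt 2) * Real.logb 2 (3 + 2 * Real.sqrt 2)
      + (3 - 2 * Real.sqrt 2) * Real.logb 2 (3 - 2 * Real.sqrt 2)) / 12 - 2 / 3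
    0 < I ∧ I < 2 / 3 ∧ I < Real.logb 2 3 / 2 := by
  intro I
  have hIdef : I = ((3 + 2 * Real.sqrt 2) * Real.logb 2 (3 + 2 * Real.sqrt 2)
      + (3 - 2 * Real.sqrt 2) * Real.logb 2 (3 - 2 * Real.sqrt 2)) / 12 - 2 / 3 := rfl
  set x := Real.sqrt 2 with hx
  have hx0 : (0:ℝ) < x := Real.sqrt_pos.mpr (by norm_num)
  have hx2 : x ^ 2 = 2 := Real.sq_sqrt (by norm_num)
  have hx1 : 1 < x := by nlinarith
  have hx32 : x < 3/2 := by nlinarith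
  have hx14 : 7/5 < x := by nlinarith
  have hpos : (0:ℝ) < 3 + 2*x := by linarith
  have hinv : (3 - 2*x : ℝ) = (3 + 2*x)⁻¹ := by
    rw [inv_eq_one_div, eq_div_iff (by positivity)]
    nlinarith
  set L := Real.logb 2 (3 + 2*x) with hL
  have hlogb : Real.logb 2 (3 - 2*x) = - L := by
    rw [hinv, Real.logb_inv]
  have hIeq : I = x * L / 3 - 2/3 := by
    rw [hIdef]
    have h1 : (3 + 2 * x : ℝ) = 3 + 2*x := rfl
    rw [show Real.logb 2 (3 - 2 * x) = Real.logb 2 (3 - 2*x) by ring_nf, hlogb]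
    ring
  -- lower bound: x < L
  have hLlow : x < L := by
    rw [hL, Real.lt_logb_iff_rpow_lt (by norm_num) hpos]
    have h2 : (2:ℝ) ^ (x:ℝ) < (2:ℝ) ^ (2:ℝ) := by
      rw [Real.rpow_lt_rpow_left_iff (by norm_num)]; linarith
    have h3 : (2:ℝ) ^ (2:ℝ) = 4 := by
      rw [show (2:ℝ) = ((2:ℕ):ℝ) by norm_num, Real.rpow_natCast]; norm_num
    linarith
  -- upper bound: L < 2x
  have hLhigh : L < 2*x := by
    rw [hL, Real.logb_lt_iff_lt_rpow (by norm_num) hpos]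
    have h145 : (2:ℝ) ^ ((14:ℝ)/5) < (2:ℝ) ^ (2*x) := by
      rw [Real.rpow_lt_rpow_left_iff (by norm_num)]; linarith
    have h6 : (6:ℝ) ≤ (2:ℝ) ^ ((14:ℝ)/5) := by
      have hp : (0:ℝ) ≤ (2:ℝ) ^ ((14:ℝ)/5) := (Real.rpow_pos_of_pos (by norm_num) _).le
      refine le_of_pow_le_pow_left₀ (n := 5) (by norm_num) hp ?_
      have : ((2:ℝ) ^ ((14:ℝ)/5)) ^ (5:ℕ) = (2:ℝ) ^ ((14:ℝ)) := by
        rw [← Real.rpow_natCast ((2:ℝ) ^ ((14:ℝ)/5)) 5, ← Real.rpow_mul (by norm_num)]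
        norm_num
      rw [this, show (14:ℝ) = ((14:ℕ):ℝ) by norm_num, Real.rpow_natCast]
      norm_num
    linarith
  clear_value L x I
  have h1 : 0 < I := by nlinarith [mul_lt_mul_of_pos_left hLlow hx0]
  have h2 : I < 2/3 := by nlinarith [mul_lt_mul_of_pos_left hLhigh hx0]
  refine ⟨h1, h2, ?_⟩
  have hlog3 : 4/3 < Real.logb 2 3 := by
    rw [Real.lt_logb_iff_rpow_lt (by norm_num) (by norm_num)]
    have hp : (0:ℝ) < (2:ℝ) ^ ((4:ℝ)/3) := Real.rpow_pos_of_pos (by norm_num) _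
    refine lt_of_pow_lt_pow_left₀ 3 (by norm_num) ?_
    have : ((2:ℝ) ^ ((4:ℝ)/3)) ^ (3:ℕ) = (2:ℝ) ^ ((4:ℝ)) := by
      rw [← Real.rpow_natCast ((2:ℝ) ^ ((4:ℝ)/3)) 3, ← Real.rpow_mul (by norm_num)]
      norm_num
    rw [this, show (4:ℝ) = ((4:ℕ):ℝ) by norm_num, Real.rpow_natCast]
    norm_num
  linarith
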